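/- If pencils α and β satisfy ¬(α ≠ β), then α ≈ β; conversely, if α ≈ β with α complete and β strictly complete, then ¬(α ≠ β). -/
import Mathlib


/-- An incidence plane: points, lines, and an incidence relation. -/
structure IncidencePlane where
  Point : Type
  Line : Type
  mem : Point → Line → Prop

namespace IncidencePlane

variable (G : IncidencePlane)

/-- Lines `l` and `m` intersect: they are distinct and have a common point. -/
def Intersect (l m : G.Line) : Prop := l ≠ m ∧ ∃ Q, G.mem Q l ∧ G.mem Q m

/-- Parallel is the negation of intersecting. -/
def Par (l m : G.Line) : Prop := ¬ G.Intersect l m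

/-- The point set of a line. -/
def lineSet (l : G.Line) : Set G.Point := {Q | G.mem Q l}

/-- The pencil of all lines through a point `Q`, written `Q*`. -/
def pointPencil (Q : G.Point) : Set G.Line := {l | G.mem Q l}

/-- The pencil of all lines parallel to `l`, written `l*`. -/
def parPencil (l : G.Line) : Set G.Line := {m | G.Par m l}

/-- A regular pencil has the form `Q*` or `l*`. -/
def Regular (ρ : Set G.Line) : Prop :=
  (∃ Q, ρ = G.pointPencil Q) ∨ (∃ l, ρ = G.parPencil l)

/-- A pencil: (1) it cannot contain fewer than two lines; (2) two distinct
lines of it lying in a regular pencil `ρ` force inclusion in `ρ`. -/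
def IsPencil (α : Set G.Line) : Prop :=
  (¬ ∀ l ∈ α, ∀ m ∈ α, l = m) ∧
  (∀ ρ : Set G.Line, G.Regular ρ → ∀ l ∈ α, ∀ m ∈ α, l ≠ m → l ∈ ρ → m ∈ ρ → α ⊆ ρ)

/-- A complete pencil: two distinct lines of it in a regular pencil `ρ` force equality with `ρ`. -/
def Complete (α : Set G.Line) : Prop :=
  ∀ ρ : Set G.Line, G.Regular ρ → ∀ l ∈ α, ∀ m ∈ α, l ≠ m → l ∈ ρ → m ∈ ρ → α = ρ

/-- A strictly complete pencil: contained in a regular pencil implies equal to it. -/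
def StrictlyComplete (α : Set G.Line) : Prop :=
  ∀ ρ : Set G.Line, G.Regular ρ → α ⊆ ρ → α = ρ

/-- `l` lies outside the family `α`: it differs from every line of `α`. -/
def LineOutside (l : G.Line) (α : Set G.Line) : Prop := ∀ m ∈ α, l ≠ m

/-- Pencils `α` and `β` are distinct: some line of one lies outside the other. -/
def PDistinct (α β : Set G.Line) : Prop :=
  (∃ l ∈ α, G.LineOutside l β) ∨ (∃ l ∈ β, G.LineOutside l α)

/-- Pencils are equivalent when they are contained in exactly the same regular pencils. -/
def PEquiv (α β : Set G.Line) : Prop :=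
  ∀ ρ : Set G.Line, G.Regular ρ → (α ⊆ ρ ↔ β ⊆ ρ)

/-- A parallel pencil: a pencil any two of whose lines are parallel. -/
def ParallelPencil (α : Set G.Line) : Prop :=
  G.IsPencil α ∧ ∀ l ∈ α, ∀ m ∈ α, G.Par l m

/-- Point `Q` lies outside line `l`: it differs from every point of `l`. -/
def PointOutside (Q : G.Point) (l : G.Line) : Prop := ∀ R, G.mem R l → Q ≠ R

/-- The union of all pencils equivalent to `α` (the full pencil `α'`). -/
def fullPencil (α : Set G.Line) : Set G.Line :=
  ⋃₀ {β | G.IsPencil β ∧ G.PEquiv β α}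

/-- The core of two pencils: points lying on a common line of the two pencils. -/
def core (α β : Set G.Line) : Set G.Point :=
  {Q | ∃ l, l ∈ α ∩ β ∧ G.mem Q l}

/-- A virtual line: a set of points which is a line whenever it is inhabited. -/
def VLine (p : Set G.Point) : Prop :=
  p.Nonempty → ∃ l : G.Line, p = G.lineSet l

/-- Distinctness of virtual lines. -/
def VDistinct (p q : Set G.Point) : Prop :=
  ¬ (p = q) ∧ ∀ l m : G.Line, p = G.lineSet l → q = G.lineSet m → l ≠ m

/-- Equivalence of virtual lines: the negation of distinctness. -/
def VEquiv (p q : Set G.Point) : Prop := ¬ G.VDistinct p q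

/-- The union of all virtual lines equivalent to `p`. -/
def vfull (p : Set G.Point) : Set G.Point :=
  ⋃₀ {q | G.VLine q ∧ G.VEquiv q p}

/-- The axioms of an incidence plane used in this paper. -/
structure Axioms (G : IncidencePlane) : Prop where
  join : ∀ Q R : G.Point, Q ≠ R → ∃ l, G.mem Q l ∧ G.mem R l
  join_unique : ∀ Q R : G.Point, Q ≠ R → ∀ l m : G.Line,
      G.mem Q l → G.mem R l → G.mem Q m → G.mem R m → l = m
  cross_unique : ∀ l m : G.Line, l ≠ m → ∀ Q R : G.Point,
      G.mem Q l → G.mem Q m → G.mem R l → G.mem R m → Q = R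
  parPost : ∀ (Q : G.Point) (l : G.Line), ∃ n, G.mem Q n ∧ G.Par n l
  parPost_unique : ∀ (Q : G.Point) (l : G.Line) (n n' : G.Line),
      G.mem Q n → G.Par n l → G.mem Q n' → G.Par n' l → n = n'
  par_int : ∀ n₁ n₂ l m : G.Line,
      G.Par n₁ l → G.Par n₂ m → G.Intersect l m → G.Intersect n₁ n₂
  not_pointOutside : ∀ (Q : G.Point) (l : G.Line), ¬ G.PointOutside Q l → G.mem Q l
  two_points : ∀ l : G.Line, ∃ Q R : G.Point, Q ≠ R ∧ G.mem Q l ∧ G.mem R l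
  exists_intersecting : ∃ l m : G.Line, G.Intersect l m

end IncidencePlane

open IncidencePlane

/-- ¬(α ≠ β) implies α ≈ β; conversely, α ≈ β with α complete
and β strictly complete implies ¬(α ≠ β). -/
theorem not_distinct_equiv (G : IncidencePlane) (ax : G.Axioms)
    (α β : Set G.Line) (hα : G.IsPencil α) (hβ : G.IsPencil β) :
    (¬ G.PDistinct α β → G.PEquiv α β) ∧
    (G.PEquiv α β → G.Complete α → G.StrictlyComplete β →
      ¬ G.PDistinct α β) := by
  have eq_of_not : ∀ γ δ : Set G.Line, ¬ G.PDistinct γ δ → γ = δ := by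
    intro γ δ h
    rw [IncidencePlane.PDistinct, not_or] at h
    obtain ⟨h1, h2⟩ := h
    push_neg at h1 h2
    apply Set.Subset.antisymm
    · intro l hl
      have hne := h1 l hl
      simp only [IncidencePlane.LineOutside, not_forall] at hne
      obtain ⟨m', hm', he⟩ := hne
      rw [not_not] at he
      exact he ▸ hm'
    · intro l hl
      have hne := h2 l hl
      simp only [IncidencePlane.LineOutside, not_forall] at hne
      obtain ⟨m', hm', he⟩ := hne
      rw [not_not] at he
      exact he ▸ hm'
  have not_self : ∀ γ : Set G.Line, ¬ G.PDistinct γ γ := by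
    intro γ h
    rcases h with ⟨l, hl, ho⟩ | ⟨l, hl, ho⟩ <;> exact ho l hl rfl
  constructor
  · intro h ρ hρ
    rw [eq_of_not α β h]
  · intro hequiv hcomp hsc
    -- α has two distinct lines
    obtain ⟨l, hl, m, hm, hlm⟩ : ∃ l ∈ α, ∃ m ∈ α, l ≠ m := by
      by_contra h
      push_neg at h
      exact hα.1 h
    -- find regular ρ containing both
    obtain ⟨ρ, hρ, hlρ, hmρ⟩ : ∃ ρ, G.Regular ρ ∧ l ∈ ρ ∧ m ∈ ρ := by
      by_cases hint : G.Intersect l m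
      · obtain ⟨_, Q, hQl, hQm⟩ := hint
        exact ⟨G.pointPencil Q, Or.inl ⟨Q, rfl⟩, hQl, hQm⟩
      · refine ⟨G.parPencil m, Or.inr ⟨m, rfl⟩, hint, ?_⟩
        intro hc
        exact hc.1 rfl
    have hαρ : α = ρ := hcomp ρ hρ l hl m hm hlm hlρ hmρ
    have hβρ : β ⊆ ρ := (hequiv ρ hρ).mp (hαρ ▸ Set.Subset.refl _)
    have : β = ρ := hsc ρ hρ hβρ
    rw [hαρ, this]
    exact not_self ρ
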